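/- For every l ∈ {1, …, m}, E[Z_l · 1_{S ≤ c} + c · (Z_l / S) · 1_{S > c}] = (λ_l / Λ) · (c − Σ_{h=0}^{c} (c−h) · Λ^h e^{−Λ} / h!). -/

import Mathlib

open MeasureTheory ProbabilityTheory Real
open scoped NNReal ENNReal

namespace PC

lemma pm_singleton (r : ℝ≥0) (n : ℕ) :
    poissonMeasure r {n} = ENNReal.ofReal (poissonPMFReal r n) := by
  rw [poissonMeasure_singleton]
  rfl

lemma pp_conv (a b : ℝ≥0) (n : ℕ) :
    ∑ p ∈ Finset.HasAntidiagonal.antidiagonal n, poissonPMFReal a p.1 * poissonPMFReal b p.2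
      = poissonPMFReal (a + b) n := by
  rw [Finset.Nat.sum_antidiagonal_eq_sum_range_succ
    (fun i j => poissonPMFReal a i * poissonPMFReal b j)]
  unfold poissonPMFReal
  push_cast
  rw [add_pow]
  rw [Finset.mul_sum, Finset.sum_div, Finset.sum_congr rfl]
  intro k hk
  have hkn : k ≤ n := Nat.lt_succ_iff.mp (Finset.mem_range.mp hk)
  have hfac : (n.factorial : ℝ) = (n.choose k) * k.factorial * (n - k).factorial := by
    exact_mod_cast (Nat.choose_mul_factorial_mul_factorial hkn).symm
  have h1 : (k.factorial : ℝ) ≠ 0 := by positivity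
  have h2 : ((n - k).factorial : ℝ) ≠ 0 := by positivity
  have h3 : (n.factorial : ℝ) ≠ 0 := by positivity
  have he : rexp (-(↑a + ↑b)) = rexp (-↑a) * rexp (-↑b) := by
    rw [← Real.exp_add]; ring_nf
  have h4 : (n.choose k : ℝ) ≠ 0 := by
    exact_mod_cast Nat.cast_ne_zero.mpr (Nat.choose_pos hkn).ne'
  rw [he]
  field_simp
  rw [hfac]
  ring


lemma conv (a b : ℝ≥0) :
    Measure.map (fun p : ℕ × ℕ => p.1 + p.2) ((poissonMeasure a).prod (poissonMeasure b))
      = poissonMeasure (a + b) := by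
  apply MeasureTheory.Measure.ext_of_singleton
  intro n
  rw [Measure.map_apply (measurable_of_countable _) (measurableSet_singleton n)]
  have hpre : (fun p : ℕ × ℕ => p.1 + p.2) ⁻¹' {n} = ⋃ p ∈ Finset.HasAntidiagonal.antidiagonal n, {p} := by
    ext p
    simp [Finset.mem_antidiagonal]
  rw [hpre, measure_biUnion_finset ?disj (fun p _ => measurableSet_singleton p)]
  case disj =>
    intro p _ q _ hpq
    simp [Set.disjoint_singleton, hpq]
  have heach : ∀ p ∈ Finset.HasAntidiagonal.antidiagonal n,
      ((poissonMeasure a).prod (poissonMeasure b)) {p}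
        = ENNReal.ofReal (poissonPMFReal a p.1 * poissonPMFReal b p.2) := by
    intro p _
    have : ({p} : Set (ℕ × ℕ)) = {p.1} ×ˢ {p.2} := by
      rw [Set.singleton_prod_singleton]
    rw [this, Measure.prod_prod, pm_singleton, pm_singleton,
      ENNReal.ofReal_mul poissonPMFReal_nonneg]
  rw [Finset.sum_congr rfl heach,
    ← ENNReal.ofReal_sum_of_nonneg (fun p _ => mul_nonneg poissonPMFReal_nonneg poissonPMFReal_nonneg),
    pp_conv, pm_singleton]


lemma pm_zero : poissonMeasure 0 = Measure.dirac 0 := by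
  apply MeasureTheory.Measure.ext_of_singleton
  intro n
  rw [pm_singleton, Measure.dirac_apply' _ (measurableSet_singleton n)]
  cases n with
  | zero => simp [poissonPMFReal]
  | succ k =>
      have : (0 : ℕ) ∉ ({k + 1} : Set ℕ) := by simp
      rw [Set.indicator_of_notMem this]
      simp [poissonPMFReal]

lemma sum_law {Ω : Type*} [MeasurableSpace Ω] (μ : Measure Ω) [IsProbabilityMeasure μ]
    {m : ℕ} (lam : Fin m → ℝ≥0) (Y : Fin m → Ω → ℕ)
    (hmeas : ∀ j, Measurable (Y j))
    (hindep : iIndepFun Y μ)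
    (hY : ∀ j, Measure.map (Y j) μ = poissonMeasure (lam j))
    (s : Finset (Fin m)) :
    Measure.map (fun ω => ∑ j ∈ s, Y j ω) μ = poissonMeasure (∑ j ∈ s, lam j) := by
  induction s using Finset.induction with
  | empty =>
      simp only [Finset.sum_empty]
      rw [Measure.map_const, measure_univ, one_smul, pm_zero]
  | @insert i s hi ih =>
      have hR : Measurable (fun ω => ∑ j ∈ s, Y j ω) := by
        exact Finset.measurable_sum s (fun j _ => hmeas j)
      have hInd : IndepFun (Y i) (fun ω => ∑ j ∈ s, Y j ω) μ := by
        have := (hindep.indepFun_finset_sum_of_notMem hmeas hi).symm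
        convert this using 1
        ext ω
        simp [Finset.sum_apply]
      have hpair : Measure.map (fun ω => (Y i ω, ∑ j ∈ s, Y j ω)) μ
          = (Measure.map (Y i) μ).prod (Measure.map (fun ω => ∑ j ∈ s, Y j ω) μ) :=
        (indepFun_iff_map_prod_eq_prod_map_map (hmeas i).aemeasurable hR.aemeasurable).mp hInd
      have hcomp : (fun ω => ∑ j ∈ insert i s, Y j ω)
          = (fun p : ℕ × ℕ => p.1 + p.2) ∘ (fun ω => (Y i ω, ∑ j ∈ s, Y j ω)) := by
        ext ω
        simp [Finset.sum_insert hi]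
      rw [hcomp, ← Measure.map_map (measurable_of_countable _) ((hmeas i).prodMk hR),
        hpair, hY i, ih, conv, Finset.sum_insert hi]


noncomputable def phi (c s : ℕ) : ℝ := if s ≤ c then 1 else (c : ℝ) / s

lemma phi_nonneg (c s : ℕ) : 0 ≤ phi c s := by
  unfold phi; split <;> positivity

lemma phi_le_one (c s : ℕ) : phi c s ≤ 1 := by
  unfold phi
  split
  · exact le_rfl
  · next h =>
      have hcs : c < s := not_le.mp h
      have hs : (c : ℝ) ≤ s := by exact_mod_cast hcs.le
      have hs0 : (0:ℝ) < s := by exact_mod_cast Nat.lt_of_le_of_lt (Nat.zero_le c) hcs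
      rw [div_le_one hs0]
      exact hs

lemma G_bound (c z w : ℕ) : |(z:ℝ) * phi c (z+w)| ≤ c := by
  rw [abs_of_nonneg (mul_nonneg (by positivity) (phi_nonneg _ _))]
  unfold phi
  split
  · next h =>
      rw [mul_one]
      exact_mod_cast le_trans (Nat.le_add_right z w) h
  · next h =>
      have hlt : c < z + w := not_le.mp h
      have hs0 : (0:ℝ) < (z:ℝ) + w := by
        have : 0 < z + w := lt_of_le_of_lt (Nat.zero_le c) hlt
        exact_mod_cast this
      rw [Nat.cast_add, mul_div_assoc', div_le_iff₀ hs0]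
      push_cast
      nlinarith [hs0, (Nat.cast_nonneg z : (0:ℝ) ≤ z), (Nat.cast_nonneg w : (0:ℝ) ≤ w)]

lemma pp_succ (r : ℝ≥0) (n : ℕ) :
    ((n:ℝ)+1) * poissonPMFReal r (n+1) = r * poissonPMFReal r n := by
  unfold poissonPMFReal
  rw [Nat.factorial_succ]
  have h1 : (n.factorial:ℝ) ≠ 0 := by positivity
  have h2 : ((n:ℝ)+1) ≠ 0 := by positivity
  push_cast
  field_simp
  ring

lemma pp_summable (r : ℝ≥0) : Summable (poissonPMFReal r) := (poissonPMFRealSum r).summable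

lemma pp_tsum (r : ℝ≥0) : ∑' n, poissonPMFReal r n = 1 := (poissonPMFRealSum r).tsum_eq

lemma pp_toReal (r : ℝ≥0) (n : ℕ) : (poissonPMF r n).toReal = poissonPMFReal r n := by
  have : poissonPMF r n = ENNReal.ofReal (poissonPMFReal r n) := rfl
  rw [this, ENNReal.toReal_ofReal poissonPMFReal_nonneg]

lemma integrable_of_bound {α : Type*} [MeasurableSpace α] [Countable α]
    [MeasurableSingletonClass α]
    (P : Measure α) [IsFiniteMeasure P] (f : α → ℝ) (C : ℝ) (h : ∀ x, |f x| ≤ C) :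
    Integrable f P :=
  Integrable.mono' (integrable_const C) ((measurable_of_countable f).aestronglyMeasurable)
    (ae_of_all _ (by simpa [Real.norm_eq_abs] using h))

lemma final_sum (r : ℝ≥0) (hr : 0 < r) (c : ℕ) :
    (r : ℝ) * ∑' s, poissonPMFReal r s * phi c (s+1)
      = (c : ℝ) - ∑ h ∈ Finset.range (c+1), ((c:ℝ) - h) * poissonPMFReal r h := by
  have hr0 : (r : ℝ) ≠ 0 := by exact_mod_cast hr.ne'
  set p := poissonPMFReal r with hp
  have hsummable : Summable (fun s => p s * phi c (s+1)) := by
    apply Summable.of_nonneg_of_le (fun s => mul_nonneg poissonPMFReal_nonneg (phi_nonneg _ _))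
      (fun s => ?_) (pp_summable r)
    calc p s * phi c (s+1) ≤ p s * 1 :=
          mul_le_mul_of_nonneg_left (phi_le_one _ _) poissonPMFReal_nonneg
      _ = p s := mul_one _
  have hsplit := Summable.sum_add_tsum_nat_add c hsummable
  have h1 : ∀ s ∈ Finset.range c, p s * phi c (s+1) = p s := by
    intro s hs
    have : s + 1 ≤ c := Finset.mem_range.mp hs
    simp [phi, this]
  have h2 : ∀ i : ℕ, p (i + c) * phi c (i + c + 1) = ((c:ℝ) / r) * p (i + c + 1) := by
    intro i
    have hgt : ¬ (i + c + 1 ≤ c) := by omega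
    have hphi : phi c (i + c + 1) = (c:ℝ) / ((i + c + 1 : ℕ) : ℝ) := by
      simp [phi, hgt]
    have hps := pp_succ r (i + c)
    have hn1 : ((i + c : ℕ):ℝ) + 1 ≠ 0 := by positivity
    have hcast : (((i + c + 1 : ℕ)) : ℝ) = ((i + c : ℕ):ℝ) + 1 := by push_cast; ring
    have hval : p (i + c + 1) = (r:ℝ) * p (i + c) / (((i+c:ℕ):ℝ) + 1) := by
      rw [eq_div_iff hn1]
      linarith [hps]
    rw [hphi, hcast, hval]
    field_simp
  have h3 : ∑' i, p (i + c) * phi c (i + c + 1) = ((c:ℝ)/r) * (1 - ∑ h ∈ Finset.range (c+1), p h) := by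
    rw [tsum_congr h2, tsum_mul_left]
    congr 1
    have htot := Summable.sum_add_tsum_nat_add (f := p) (c+1) (pp_summable r)
    simp only [show ∀ i:ℕ, i + (c+1) = i + c + 1 from fun i => by omega] at htot
    rw [pp_tsum] at htot
    linarith
  have hrA : (r:ℝ) * ∑ s ∈ Finset.range c, p s = ∑ h ∈ Finset.range (c+1), (h:ℝ) * p h := by
    rw [Finset.sum_range_succ' (fun h => (h:ℝ) * p h) c]
    simp only [Nat.cast_zero, zero_mul, add_zero]
    rw [Finset.mul_sum]
    refine (Finset.sum_congr rfl fun h _ => ?_).symm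
    push_cast
    exact pp_succ r h
  have hSig : ∑ h ∈ Finset.range (c+1), ((c:ℝ) - h) * p h
      = (c:ℝ) * (∑ h ∈ Finset.range (c+1), p h) - ∑ h ∈ Finset.range (c+1), (h:ℝ) * p h := by
    rw [Finset.mul_sum, ← Finset.sum_sub_distrib]
    exact Finset.sum_congr rfl (fun h _ => by ring)
  rw [← hsplit, Finset.sum_congr rfl h1, h3, hSig, ← hrA]
  field_simp
  ring


lemma phi_abs_le (c s : ℕ) : |phi c s| ≤ 1 := by
  rw [abs_of_nonneg (phi_nonneg c s)]
  exact phi_le_one c s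

lemma key {Ω : Type*} [MeasurableSpace Ω] (μ : Measure Ω) [IsProbabilityMeasure μ]
    (c : ℕ) (a b : ℝ≥0) (X R : Ω → ℕ) (hX : Measurable X) (hR : Measurable R)
    (hXl : Measure.map X μ = poissonMeasure a) (hRl : Measure.map R μ = poissonMeasure b)
    (hInd : IndepFun X R μ) :
    ∫ ω, (X ω : ℝ) * phi c (X ω + R ω) ∂μ
      = (a:ℝ) * ∑' s, poissonPMFReal (a+b) s * phi c (s+1) := by
  have hpair : Measure.map (fun ω => (X ω, R ω)) μ
      = (poissonMeasure a).prod (poissonMeasure b) := by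
    rw [← hXl, ← hRl]
    exact (indepFun_iff_map_prod_eq_prod_map_map hX.aemeasurable hR.aemeasurable).mp hInd
  set G : ℕ × ℕ → ℝ := fun p => (p.1 : ℝ) * phi c (p.1 + p.2) with hG
  have hGint : Integrable G ((poissonMeasure a).prod (poissonMeasure b)) :=
    integrable_of_bound _ G c (fun p => G_bound c p.1 p.2)
  have step1 : ∫ ω, (X ω : ℝ) * phi c (X ω + R ω) ∂μ
      = ∫ p, G p ∂((poissonMeasure a).prod (poissonMeasure b)) := by
    rw [← hpair, integral_map (hX.aemeasurable.prodMk hR.aemeasurable)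
      (measurable_of_countable G).aestronglyMeasurable]
  rw [step1, integral_prod_symm G hGint]
  -- inner Mecke step
  have hinner : ∀ w : ℕ, ∫ x, G (x, w) ∂(poissonMeasure a)
      = (a:ℝ) * ∑' x, poissonPMFReal a x * phi c (x + w + 1) := by
    intro w
    have hint : Integrable (fun x => G (x, w)) (poissonPMF a).toMeasure :=
      integrable_of_bound _ _ c (fun x => G_bound c x w)
    rw [integral_poissonMeasure]
    have hsum : Summable (fun x => poissonPMFReal a x * ((x:ℝ) * phi c (x + w))) := by
      apply Summable.of_nonneg_of_le
        (fun x => mul_nonneg poissonPMFReal_nonneg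
          (mul_nonneg (by positivity) (phi_nonneg _ _)))
        (fun x => ?_) (((pp_summable a).mul_right (c:ℝ)) :
          Summable fun x => poissonPMFReal a x * (c:ℝ))
      calc poissonPMFReal a x * ((x:ℝ) * phi c (x + w))
          ≤ poissonPMFReal a x * c := by
            apply mul_le_mul_of_nonneg_left _ poissonPMFReal_nonneg
            exact (abs_le.mp (G_bound c x w)).2
        _ = _ := rfl
    have hsmul : ∀ x : ℕ, (rexp (-(a:ℝ)) * (a:ℝ) ^ x / (x.factorial : ℝ)) • G (x, w)
        = poissonPMFReal a x * ((x:ℝ) * phi c (x + w)) := by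
      intro x
      rw [smul_eq_mul]; rfl
    rw [tsum_congr hsmul, Summable.tsum_eq_zero_add hsum]
    simp only [Nat.cast_zero, zero_mul, mul_zero, zero_add]
    have hterm : ∀ n : ℕ, poissonPMFReal a (n+1) * (((n+1 : ℕ):ℝ) * phi c ((n+1) + w))
        = (a:ℝ) * (poissonPMFReal a n * phi c (n + w + 1)) := by
      intro n
      have harg : (n+1) + w = n + w + 1 := by omega
      have := pp_succ a n
      rw [harg]
      push_cast
      nlinarith [this, phi_nonneg c (n + w + 1)]
    rw [tsum_congr hterm, tsum_mul_left]
  rw [integral_congr_ae (ae_of_all _ hinner), integral_const_mul]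
  congr 1
  have hback : ∀ w : ℕ, ∑' x, poissonPMFReal a x * phi c (x + w + 1)
      = ∫ x, phi c (x + w + 1) ∂(poissonMeasure a) := by
    intro w
    rw [integral_poissonMeasure]
    exact tsum_congr fun x => by rw [smul_eq_mul]; rfl
  rw [integral_congr_ae (ae_of_all _ hback)]
  have hHint : Integrable (fun p : ℕ × ℕ => phi c (p.1 + p.2 + 1))
      ((poissonMeasure a).prod (poissonMeasure b)) :=
    integrable_of_bound _ _ 1 (fun p => phi_abs_le _ _)
  rw [← integral_prod_symm _ hHint]
  have hmap := integral_map (μ := (poissonMeasure a).prod (poissonMeasure b))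
    (φ := fun p : ℕ × ℕ => p.1 + p.2) (f := fun s => phi c (s + 1))
    (measurable_of_countable _).aemeasurable
    (measurable_of_countable _).aestronglyMeasurable
  rw [conv] at hmap
  rw [← hmap, integral_poissonMeasure]
  exact tsum_congr fun s => by rw [smul_eq_mul]; rfl


lemma iIndepFun_ae_eq {Ω ι : Type*} [MeasurableSpace Ω] [Countable ι] {μ : Measure Ω}
    [IsProbabilityMeasure μ] {β : Type*} [mβ : MeasurableSpace β] {f g : ι → Ω → β}
    (hf : iIndepFun f μ) (h : ∀ i, f i =ᵐ[μ] g i) :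
    iIndepFun g μ := by
  rw [iIndepFun_iff_measure_inter_preimage_eq_mul] at hf ⊢
  intro S sets hsets
  have hae : ∀ᵐ ω ∂μ, ∀ i, f i ω = g i ω := ae_all_iff.mpr h
  have hiInt : μ (⋂ i ∈ S, g i ⁻¹' sets i) = μ (⋂ i ∈ S, f i ⁻¹' sets i) := by
    apply measure_congr
    rw [Filter.eventuallyEq_set]
    filter_upwards [hae] with ω hω
    simp only [Set.mem_iInter, Set.mem_preimage]
    exact ⟨fun H i hi => by rw [hω i]; exact H i hi, fun H i hi => by rw [← hω i]; exact H i hi⟩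
  have hsingle : ∀ i ∈ S, μ (g i ⁻¹' sets i) = μ (f i ⁻¹' sets i) := by
    intro i _
    apply measure_congr
    rw [Filter.eventuallyEq_set]
    filter_upwards [h i] with ω hω
    simp [Set.mem_preimage, hω]
  rw [hiInt, hf S hsets, Finset.prod_congr rfl hsingle]

end PC

open PC in
/-- Let `Z_1, …, Z_m` be independent Poisson random variables with parameters
`λ_1, …, λ_m > 0`, `Λ = λ_1 + … + λ_m` and `S = Z_1 + … + Z_m`. For every `l`,
`E[Z_l · 1_{S ≤ c} + c · (Z_l / S) · 1_{S > c}]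
  = (λ_l / Λ) · (c − Σ_{h=0}^{c} (c−h) · Λ^h e^{−Λ} / h!)`
(with the convention `Z_l/S := 0` when `S = 0`). -/
theorem expectation_poisson_coupons {Ω : Type*} [MeasurableSpace Ω]
    (μ : Measure Ω) [IsProbabilityMeasure μ]
    (m c : ℕ) (hm : 1 ≤ m) (hc : 1 ≤ c)
    (lam : Fin m → NNReal) (hlam : ∀ j, 0 < lam j)
    (Z : Fin m → Ω → ℕ)
    (hindep : iIndepFun Z μ)
    (hZ : ∀ j, Measure.map (Z j) μ = poissonMeasure (lam j))
    (l : Fin m) :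
    ∫ ω, ((Z l ω : ℝ) * (if (∑ j, Z j ω) ≤ c then (1 : ℝ) else 0)
        + (c : ℝ) * ((Z l ω : ℝ) / ((∑ j, Z j ω : ℕ) : ℝ)) *
            (if c < ∑ j, Z j ω then (1 : ℝ) else 0)) ∂μ =
      ((lam l : ℝ) / (∑ j, (lam j : ℝ))) *
        ((c : ℝ) - ∑ h ∈ Finset.range (c + 1),
          ((c : ℝ) - (h : ℝ)) * (∑ j, (lam j : ℝ)) ^ h *
            Real.exp (-(∑ j, (lam j : ℝ))) / (Nat.factorial h)) := by
  classical
  have haem : ∀ j, AEMeasurable (Z j) μ := by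
    intro j
    by_contra h
    have h0 : poissonMeasure (lam j) = 0 := by
      rw [← hZ j, Measure.map_of_not_aemeasurable h]
    have h1 := measure_univ (μ := poissonMeasure (lam j))
    rw [h0] at h1
    simp at h1
  set Y : Fin m → Ω → ℕ := fun j => (haem j).mk (Z j) with hYdef
  have hYmeas : ∀ j, Measurable (Y j) := fun j => (haem j).measurable_mk
  have hZY : ∀ j, Z j =ᵐ[μ] Y j := fun j => (haem j).ae_eq_mk
  have hYindep : iIndepFun Y μ := iIndepFun_ae_eq hindep hZY
  have hYlaw : ∀ j, Measure.map (Y j) μ = poissonMeasure (lam j) := by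
    intro j
    rw [← Measure.map_congr (hZY j), hZ j]
  set R : Ω → ℕ := fun ω => ∑ j ∈ Finset.univ.erase l, Y j ω with hRdef
  have hRmeas : Measurable R := Finset.measurable_sum _ (fun j _ => hYmeas j)
  set b : ℝ≥0 := ∑ j ∈ Finset.univ.erase l, lam j with hbdef
  have hRlaw : Measure.map R μ = poissonMeasure b :=
    sum_law μ lam Y hYmeas hYindep hYlaw _
  have hInd : IndepFun (Y l) R μ := by
    have := (hYindep.indepFun_finset_sum_of_notMem hYmeas
      (Finset.notMem_erase l Finset.univ)).symm
    convert this using 1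
    ext ω
    simp [hRdef, Finset.sum_apply]
  have hkey := key μ c (lam l) b (Y l) R (hYmeas l) hRmeas (hYlaw l) hRlaw hInd
  have hLHS : ∫ ω, ((Z l ω : ℝ) * (if (∑ j, Z j ω) ≤ c then (1 : ℝ) else 0)
        + (c : ℝ) * ((Z l ω : ℝ) / ((∑ j, Z j ω : ℕ) : ℝ)) *
            (if c < ∑ j, Z j ω then (1 : ℝ) else 0)) ∂μ
      = ∫ ω, (Y l ω : ℝ) * phi c (Y l ω + R ω) ∂μ := by
    apply integral_congr_ae
    filter_upwards [ae_all_iff.mpr hZY] with ω hω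
    have hsum : (∑ j, Z j ω) = Y l ω + R ω := by
      rw [show (∑ j, Z j ω) = ∑ j, Y j ω from Finset.sum_congr rfl (fun j _ => hω j)]
      exact (Finset.add_sum_erase _ _ (Finset.mem_univ l)).symm
    rw [hsum, hω l]
    unfold PC.phi
    by_cases hcc : Y l ω + R ω ≤ c
    · simp [hcc, not_lt.mpr hcc]
    · have hlt : c < Y l ω + R ω := not_le.mp hcc
      simp only [if_neg hcc, if_pos hlt]
      push_cast
      ring
  rw [hLHS, hkey]
  have hb : lam l + b = ∑ j, lam j := Finset.add_sum_erase _ lam (Finset.mem_univ l)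
  have hpos : (0:ℝ≥0) < lam l + b := lt_of_lt_of_le (hlam l) le_self_add
  have hfin := final_sum (lam l + b) hpos c
  have hco : ((lam l + b : ℝ≥0) : ℝ) = ∑ j, (lam j : ℝ) := by
    rw [hb]
    push_cast
    rfl
  have hΛpos : (0:ℝ) < ∑ j, (lam j : ℝ) := by
    rw [← hco]
    exact_mod_cast hpos
  have hppeq : ∀ h ∈ Finset.range (c+1),
      ((c:ℝ) - h) * poissonPMFReal (lam l + b) h
      = ((c:ℝ) - h) * (∑ j, (lam j : ℝ)) ^ h * Real.exp (-(∑ j, (lam j : ℝ))) / h.factorial := by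
    intro h _
    unfold poissonPMFReal
    rw [hco]
    ring
  rw [← Finset.sum_congr rfl hppeq, ← hfin, hco]
  field_simp
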